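/- Let H be a complex Hilbert space and A, B ∈ B(H) with A∘B ≠ 0 and A∘B = λ • (B∘A) for some λ ∈ ℂ. If both A and B are self-adjoint, then λ = 1 or λ = −1. -/

import Mathlib

/-- Brooke et al., part 2. If `A∘B ≠ 0`, `A∘B = λ • (B∘A)`,
and both `A` and `B` are self-adjoint, then `λ = 1` or `λ = -1`. -/
theorem comm_conditions_both_selfAdjoint
    {H : Type*} [NormedAddCommGroup H] [InnerProductSpace ℂ H] [CompleteSpace H]
    (A B : H →L[ℂ] H) (lam : ℂ)
    (hne : A ∘L B ≠ 0) (hcomm : A ∘L B = lam • (B ∘L A))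
    (hA : IsSelfAdjoint A) (hB : IsSelfAdjoint B) :
    lam = 1 ∨ lam = -1 := by
  classical
  -- work with `*` instead of `∘L`
  have hAB : A ∘L B = A * B := rfl
  have hBA : B ∘L A = B * A := rfl
  rw [hAB, hBA] at hcomm
  rw [hAB] at hne
  -- star of the product
  have hstar : star (A * B) = B * A := by
    rw [star_mul, hA.star_eq, hB.star_eq]
  have hstar' : star (B * A) = A * B := by
    rw [star_mul, hA.star_eq, hB.star_eq]
  -- `B * A = conj lam • (A * B)`
  have hBAeq : B * A = (starRingEnd ℂ) lam • (A * B) := by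
    have := congrArg star hcomm
    rw [hstar, star_smul, hstar'] at this
    simpa using this
  -- `lam * conj lam = 1`
  have habs : lam * (starRingEnd ℂ) lam = 1 := by
    have h1 : A * B = (lam * (starRingEnd ℂ) lam) • (A * B) := by
      conv_lhs => rw [hcomm, hBAeq]
      rw [smul_smul]
    by_contra h
    apply hne
    have h2 : (lam * (starRingEnd ℂ) lam - 1) • (A * B) = 0 := by
      rw [sub_smul, one_smul, ← h1, sub_self]
    rcases smul_eq_zero.mp h2 with h3 | h3
    · exact absurd (by linear_combination h3) h
    · exact h3
  have hlam0 : lam ≠ 0 := by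
    intro h; rw [h] at habs; simp at habs
  -- square root of lam
  obtain ⟨μ, hμ⟩ := Complex.isAlgClosed.exists_pow_nat_eq lam zero_lt_two
  have hμ0 : μ ≠ 0 := by
    intro h; rw [h] at hμ; simp at hμ; exact hlam0 hμ.symm
  -- `μ * conj μ = 1`
  have hμc : μ * (starRingEnd ℂ) μ = 1 := by
    have h1 : (μ * (starRingEnd ℂ) μ) ^ 2 = 1 := by
      rw [mul_pow, hμ, ← map_pow, hμ, habs]
    have h2 : μ * (starRingEnd ℂ) μ = (Complex.normSq μ : ℝ) := Complex.mul_conj μ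
    rcases mul_self_eq_one_iff (a := μ * (starRingEnd ℂ) μ) |>.mp (by linear_combination h1) with h | h
    · exact h
    · exfalso
      rw [h2] at h
      have hge : (0:ℝ) ≤ Complex.normSq μ := Complex.normSq_nonneg μ
      have him := congrArg Complex.re h
      simp at him
      linarith
  -- key identity: conj lam * μ = conj μ
  have hkey : (starRingEnd ℂ) lam * μ = (starRingEnd ℂ) μ := by
    rw [← hμ, map_pow]
    have : (starRingEnd ℂ) μ ^ 2 * μ = (starRingEnd ℂ) μ * ((starRingEnd ℂ) μ * μ) := by ring
    rw [this, mul_comm ((starRingEnd ℂ) μ) μ, hμc, mul_one]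
  -- the self-adjoint operator D
  set D : H →L[ℂ] H := (starRingEnd ℂ) μ • (A * B) with hDdef
  have hABD : A * B = μ • D := by
    rw [hDdef, smul_smul, hμc, one_smul]
  have hBAD : B * A = (starRingEnd ℂ) μ • D := by
    rw [hBAeq, hABD, smul_smul, hkey]
  have hD : IsSelfAdjoint D := by
    rw [IsSelfAdjoint, hDdef, star_smul, hstar, hBAeq, smul_smul]
    congr 1
    rw [Complex.star_def, Complex.conj_conj, mul_comm]
    exact hkey
  have hD0 : D ≠ 0 := by
    rw [hDdef]
    exact smul_ne_zero (by simpa using hμ0) hne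
  have : Nontrivial (H →L[ℂ] H) := nontrivial_of_ne D 0 hD0
  -- a spectral value of D of maximal norm
  obtain ⟨r, hrD, hr⟩ := spectrum.exists_nnnorm_eq_spectralRadius_of_nonempty
    (spectrum.nonempty D)
  rw [hD.spectralRadius_eq_nnnorm] at hr
  have hr0 : r ≠ 0 := by
    intro h
    rw [h] at hr
    simp only [nnnorm_zero, ENNReal.coe_zero] at hr
    exact hD0 (nnnorm_eq_zero.mp (by exact_mod_cast hr.symm))
  -- r is real
  have hrre : r = (r.re : ℂ) := hD.mem_spectrum_eq_re hrD
  -- μ * r ∈ σ (A * B)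
  have hu : μ • r ∈ spectrum ℂ (A * B) := by
    rw [hABD]
    exact (spectrum.smul_mem_smul_iff (r := Units.mk0 μ hμ0)).mpr hrD
  -- hence μ * r ∈ σ (B * A)
  have hμr0 : μ • r ≠ 0 := by
    simp only [smul_eq_mul]
    exact mul_ne_zero hμ0 hr0
  have hv : μ • r ∈ spectrum ℂ (B * A) := by
    have : μ • r ∈ spectrum ℂ (A * B) \ {0} := ⟨hu, by simpa using hμr0⟩
    rw [spectrum.nonzero_mul_comm] at this
    exact this.1
  -- so lam * r ∈ σ D
  have hlamcμ : lam * (starRingEnd ℂ) μ = μ := by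
    have := congrArg (starRingEnd ℂ) hkey
    simpa [map_mul, mul_comm] using this
  have hcμ0 : (starRingEnd ℂ) μ ≠ 0 := by simpa using hμ0
  have hlr : lam * r ∈ spectrum ℂ D := by
    refine (spectrum.smul_mem_smul_iff (a := D) (s := lam * r)
      (r := Units.mk0 ((starRingEnd ℂ) μ) hcμ0)).mp ?_
    show ((starRingEnd ℂ) μ) • (lam * r) ∈ spectrum ℂ (((starRingEnd ℂ) μ) • D)
    have heq : ((starRingEnd ℂ) μ) • (lam * r) = μ • r := by
      simp only [smul_eq_mul]
      linear_combination r * hlamcμ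
    rw [heq, ← hBAD]
    exact hv
  have hsre : lam * r = ((lam * r).re : ℂ) := hD.mem_spectrum_eq_re hlr
  -- lam is real
  have hlamreal : (starRingEnd ℂ) lam = lam := by
    have hc : (starRingEnd ℂ) (lam * r) = lam * r := by
      rw [hsre]; simp
    rw [map_mul] at hc
    have hrc : (starRingEnd ℂ) r = r := by rw [hrre]; simp
    rw [hrc] at hc
    exact mul_right_cancel₀ hr0 hc
  -- conclude
  rw [hlamreal] at habs
  exact mul_self_eq_one_iff.mp habs
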